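/- The highest power of 5 dividing the fibonomial coefficient C(m+n, m)_F equals the number of carries that occur when m is added to n in base 5; that is, ν₅(C(m+n, m)_F) equals the number of indices i ≥ 0 such that (m mod 5^{i+1}) + (n mod 5^{i+1}) ≥ 5^{i+1}. -/

import Mathlib

/-- The fibotorial `n!_F = F_n · F_{n-1} ⋯ F_1`, with `0!_F = 1`. -/
def fibotorial (n : ℕ) : ℕ := ∏ i ∈ Finset.range n, Nat.fib (i + 1)

/-- The fibonomial coefficient `C(n,k)_F = n!_F / (k!_F · (n-k)!_F)` for `k ≤ n`,
and `0` otherwise. -/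
def fibnomial (n k : ℕ) : ℕ :=
  if k ≤ n then fibotorial n / (fibotorial k * fibotorial (n - k)) else 0

open Nat

instance : Fact (Nat.Prime 5) := ⟨by norm_num⟩


lemma cassini (n : ℕ) : ((fib (n+1) : ℤ))^2 - fib (n+1) * fib n - (fib n)^2 = (-1)^n := by
  induction n with
  | zero => simp
  | succ k ih =>
    rw [fib_add_two]; push_cast; push_cast at ih; ring_nf; ring_nf at ih; linarith

lemma fib_two_mul_int (n : ℕ) : (fib (2*n) : ℤ) = 2 * fib n * fib (n+1) - (fib n)^2 := by
  have h : fib n ≤ 2 * fib (n+1) := le_trans (fib_le_fib_succ) (by omega)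
  rw [Nat.fib_two_mul, Nat.cast_mul, Nat.cast_sub h]; push_cast; ring

lemma fib_two_mul_add_one_int (n : ℕ) : (fib (2*n+1) : ℤ) = (fib (n+1))^2 + (fib n)^2 := by
  rw [Nat.fib_two_mul_add_one]; push_cast; ring

lemma poly_id (a b e : ℤ) (hc : b^2 - a*b - a^2 = e) (he : e^2 = 1) :
    ((a*(2*b-a))^2 + (a^2+b^2)^2 - (a*(2*b-a))*(2*(a^2+b^2) - a*(2*b-a))) * a
      + (a*(2*b-a))*(2*(a^2+b^2) - a*(2*b-a)) * b
    = 25*a^5 + 25*e*a^3 + 5*a := by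
  linear_combination (5*a*((b^2-a*b-a^2)+e)+25*a^3) * hc + 5*a*he
lemma fib_five_mul_int (n : ℕ) : ∃ e : ℤ, e^2 = 1 ∧
    (fib (5*n) : ℤ) = 25*(fib n:ℤ)^5 + 25*e*(fib n:ℤ)^3 + 5*(fib n:ℤ) := by
  refine ⟨(-1)^n, by rcases Nat.even_or_odd n with h | h
                     · rw [h.neg_one_pow]; norm_num
                     · rw [h.neg_one_pow]; norm_num, ?_⟩
  set a := (fib n : ℤ) with ha
  set b := (fib (n+1) : ℤ) with hb
  have hc : b^2 - a*b - a^2 = (-1)^n := by rw [ha, hb]; linear_combination cassini n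
  have h2 : (fib (2*n) : ℤ) = a*(2*b-a) := by rw [fib_two_mul_int]; ring
  have h3 : (fib (2*n+1) : ℤ) = a^2 + b^2 := by rw [fib_two_mul_add_one_int]; ring
  have h4 : (fib (4*n) : ℤ) = (a*(2*b-a))*(2*(a^2+b^2) - a*(2*b-a)) := by
    have := fib_two_mul_int (2*n)
    rw [show 2*(2*n) = 4*n by ring, show 2*n+1 = 2*n+1 from rfl] at this
    rw [this, h2, h3]; ring
  have h5 : (fib (4*n+1) : ℤ) = (a*(2*b-a))^2 + (a^2+b^2)^2 := by
    have := fib_two_mul_add_one_int (2*n)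
    rw [show 2*(2*n) = 4*n by ring] at this
    rw [this, h2, h3]; ring
  have hA : fib (5*n+1) = fib (4*n) * fib n + fib (4*n+1) * fib (n+1) := by
    have := Nat.fib_add (4*n) n
    rwa [show 4*n+n+1 = 5*n+1 by ring] at this
  have hB : fib (5*n+2) = fib (4*n+1) * fib n + fib (4*n+2) * fib (n+1) := by
    have := Nat.fib_add (4*n+1) n
    rwa [show 4*n+1+n+1 = 5*n+2 by ring] at this
  have hC : fib (5*n+2) = fib (5*n) + fib (5*n+1) := by
    rw [Nat.fib_add_two]
  have hD : fib (4*n+2) = fib (4*n) + fib (4*n+1) := by rw [Nat.fib_add_two]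
  have key : (fib (5*n) : ℤ)
      = ((a*(2*b-a))^2 + (a^2+b^2)^2 - (a*(2*b-a))*(2*(a^2+b^2) - a*(2*b-a))) * a
        + (a*(2*b-a))*(2*(a^2+b^2) - a*(2*b-a)) * b := by
    have : (fib (5*n) : ℤ) = (fib (5*n+2) : ℤ) - fib (5*n+1) := by
      rw [hC]; push_cast; ring
    rw [this, hA, hB, hD]; push_cast
    rw [h4, h5, ← ha, ← hb]; ring
  rw [key]
  exact poly_id a b _ hc (by rcases Nat.even_or_odd n with h | h
                             · rw [h.neg_one_pow]; norm_num
                             · rw [h.neg_one_pow]; norm_num)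




lemma five_dvd_fib_iff (n : ℕ) : 5 ∣ fib n ↔ 5 ∣ n := by
  constructor
  · intro h
    have hg : fib (Nat.gcd 5 n) = Nat.gcd (fib 5) (fib n) := Nat.fib_gcd 5 n
    have h5 : fib 5 = 5 := by decide
    have hdvd : (5:ℕ) ∣ Nat.gcd (fib 5) (fib n) := Nat.dvd_gcd (h5 ▸ dvd_refl 5) h
    have hgd : Nat.gcd 5 n ∣ 5 := Nat.gcd_dvd_left 5 n
    have h15 : Nat.gcd 5 n = 1 ∨ Nat.gcd 5 n = 5 := (Nat.Prime.eq_one_or_self_of_dvd (by norm_num) _ hgd)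
    rcases h15 with h1 | h1
    · rw [h1] at hg; simp at hg; omega
    · have := Nat.gcd_dvd_right 5 n
      rwa [h1] at this
  · intro h
    have : fib 5 ∣ fib n := Nat.fib_dvd 5 n h
    simpa [show fib 5 = 5 by decide] using this

lemma padicValNat_fib_five_mul (n : ℕ) (hn : 1 ≤ n) :
    padicValNat 5 (fib (5*n)) = padicValNat 5 (fib n) + 1 := by
  obtain ⟨e, he, hid⟩ := fib_five_mul_int n
  have he' : e = 1 ∨ e = -1 := by rcases Int.isUnit_iff.mp (IsUnit.of_mul_eq_one (a := e) e (by linarith [sq e ▸ he])) with h|h <;> [left;right] <;> omega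
  haveI : Fact (Nat.Prime 5) := ⟨by norm_num⟩
  set a : ℕ := fib n with hadef
  have ha1 : 1 ≤ a := Nat.fib_pos.mpr hn
  have hK : (0:ℤ) ≤ (a:ℤ)^4 + e*(a:ℤ)^2 := by
    have : (1:ℤ) ≤ (a:ℤ) := by exact_mod_cast ha1
    rcases he' with h | h <;> subst h <;> nlinarith
  set K : ℕ := ((a:ℤ)^4 + e*(a:ℤ)^2).toNat with hKdef
  have hKc : (K:ℤ) = (a:ℤ)^4 + e*(a:ℤ)^2 := Int.toNat_of_nonneg hK
  have hNat : fib (5*n) = a * (5 * (5*K+1)) := by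
    have : ((fib (5*n) : ℤ)) = ((a * (5 * (5*K+1)) : ℕ) : ℤ) := by
      push_cast
      rw [hid, hKc]
      ring
    exact_mod_cast this
  rw [hNat, padicValNat.mul (by omega) (by omega),
      padicValNat.mul (p := 5) (by omega) (by omega),
      padicValNat.self (by norm_num),
      padicValNat.eq_zero_of_not_dvd (n := 5*K+1) (by omega)]



lemma padicValNat_fib (n : ℕ) : padicValNat 5 (fib n) = padicValNat 5 n := by
  induction n using Nat.strong_induction_on with
  | _ n ih =>
    rcases Nat.eq_zero_or_pos n with rfl | hn
    · simp
    by_cases hdvd : 5 ∣ n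
    · obtain ⟨m, rfl⟩ := hdvd
      have hm : 1 ≤ m := by omega
      rw [padicValNat_fib_five_mul m hm, ih m (by omega),
          padicValNat.mul (p := 5) (by omega) (by omega), padicValNat.self (by norm_num)]
      omega
    · rw [padicValNat.eq_zero_of_not_dvd hdvd,
          padicValNat.eq_zero_of_not_dvd (fun h => hdvd ((five_dvd_fib_iff n).mp h))]


lemma fibotorial_pos (n : ℕ) : 0 < fibotorial n :=
  Finset.prod_pos fun i _ => Nat.fib_pos.mpr (by omega)

lemma padicValNat_fibotorial (n : ℕ) : padicValNat 5 (fibotorial n) = padicValNat 5 (n !) := by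
  induction n with
  | zero => simp [fibotorial]
  | succ k ih =>
    rw [show fibotorial (k+1) = fibotorial k * fib (k+1) from Finset.prod_range_succ _ _,
        Nat.factorial_succ,
        padicValNat.mul (p := 5) (fibotorial_pos k).ne' (Nat.fib_pos.mpr (by omega)).ne',
        padicValNat.mul (p := 5) (by omega) (Nat.factorial_pos k).ne',
        ih, padicValNat_fib]
    omega

lemma fibotorial_dvd (n : ℕ) : ∀ k ≤ n, fibotorial k * fibotorial (n - k) ∣ fibotorial n := by
  induction n using Nat.strong_induction_on with
  | _ n ih =>
    intro k hk
    rcases Nat.eq_zero_or_pos k with rfl | hk0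
    · simp [fibotorial]
    rcases eq_or_lt_of_le hk with rfl | hkn
    · simp [fibotorial]
    -- 1 ≤ k < n
    have hn1 : 1 ≤ n := by omega
    have hsplit : fibotorial n = fib n * fibotorial (n-1) := by
      have := Finset.prod_range_succ (fun i => fib (i+1)) (n-1)
      rw [show n - 1 + 1 = n by omega] at this
      rw [show fibotorial n = _ from this]
      unfold fibotorial
      ring
    have hfib : fib n = fib k * fib (n-k-1) + fib (k+1) * fib (n-k) := by
      have := Nat.fib_add k (n-k-1)
      rw [show k + (n-k-1) + 1 = n by omega, show n-k-1+1 = n-k by omega] at this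
      exact this
    rw [hsplit, hfib, add_mul]
    apply dvd_add
    · -- fib k * fib (n-k-1) * fibotorial (n-1); use IH at (n-1, k-1)
      have h1 : fibotorial (k-1) * fibotorial ((n-1)-(k-1)) ∣ fibotorial (n-1) :=
        ih (n-1) (by omega) (k-1) (by omega)
      have hk' : fibotorial k = fibotorial (k-1) * fib k := by
        have := Finset.prod_range_succ (fun i => fib (i+1)) (k-1)
        rw [show k - 1 + 1 = k by omega] at this
        exact this
      calc fibotorial k * fibotorial (n-k)
          = fib k * (fibotorial (k-1) * fibotorial ((n-1)-(k-1))) := by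
            rw [hk', show (n-1)-(k-1) = n-k by omega]; ring
        _ ∣ fib k * fibotorial (n-1) := mul_dvd_mul_left _ h1
        _ ∣ fib k * fib (n-k-1) * fibotorial (n-1) := by
            rw [mul_assoc]
            exact mul_dvd_mul_left _ (dvd_mul_left _ _)
    · -- fib (k+1) * fib (n-k) * fibotorial (n-1); use IH at (n-1, k)
      have h1 : fibotorial k * fibotorial ((n-1)-k) ∣ fibotorial (n-1) :=
        ih (n-1) (by omega) k (by omega)
      have hnk' : fibotorial (n-k) = fibotorial (n-k-1) * fib (n-k) := by
        have := Finset.prod_range_succ (fun i => fib (i+1)) (n-k-1)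
        rw [show n - k - 1 + 1 = n - k by omega] at this
        exact this
      calc fibotorial k * fibotorial (n-k)
          = fib (n-k) * (fibotorial k * fibotorial ((n-1)-k)) := by
            rw [hnk', show (n-1)-k = n-k-1 by omega]; ring
        _ ∣ fib (n-k) * fibotorial (n-1) := mul_dvd_mul_left _ h1
        _ ∣ fib (k+1) * fib (n-k) * fibotorial (n-1) := by
            rw [show fib (k+1) * fib (n-k) * fibotorial (n-1)
                  = fib (k+1) * (fib (n-k) * fibotorial (n-1)) by ring]
            exact dvd_mul_left _ _





theorem fibnomial_five_valuation_carries (m n : ℕ) :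
    padicValNat 5 (fibnomial (m + n) m) =
      Set.ncard {i : ℕ | 5 ^ (i + 1) ≤ m % 5 ^ (i + 1) + n % 5 ^ (i + 1)} := by
  rcases Nat.eq_zero_or_pos (m + n) with hmn0 | hmn
  · have hm : m = 0 := by omega
    have hn : n = 0 := by omega
    subst hm; subst hn
    have h1 : fibnomial 0 0 = 1 := by simp [fibnomial, fibotorial]
    have h2 : {i : ℕ | 5 ^ (i + 1) ≤ 0 % 5 ^ (i + 1) + 0 % 5 ^ (i + 1)} = (∅ : Set ℕ) := by
      ext i; simp [Nat.pow_pos]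
    rw [h1, h2, Set.ncard_empty]
    simp
  -- main case
  have hdvd : fibotorial m * fibotorial n ∣ fibotorial (m + n) := by
    have := fibotorial_dvd (m + n) m (Nat.le_add_right m n)
    rwa [Nat.add_sub_cancel_left] at this
  have hfib : fibnomial (m + n) m = fibotorial (m + n) / (fibotorial m * fibotorial n) := by
    rw [fibnomial, if_pos (Nat.le_add_right m n), Nat.add_sub_cancel_left]
  -- valuation of fibnomial equals valuation of choose
  have hval : padicValNat 5 (fibnomial (m + n) m) = padicValNat 5 (Nat.choose (m + n) m) := by
    rw [hfib, padicValNat.div_of_dvd hdvd,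
        padicValNat.mul (p := 5) (fibotorial_pos m).ne' (fibotorial_pos n).ne',
        padicValNat_fibotorial, padicValNat_fibotorial, padicValNat_fibotorial]
    have hch : Nat.choose (m + n) m * n ! * m ! = (m + n)! := by
      have := Nat.add_choose_mul_factorial_mul_factorial n m
      rw [add_comm n m] at this
      exact this
    have : padicValNat 5 ((m+n)!) =
        padicValNat 5 (Nat.choose (m + n) m) + padicValNat 5 (n !) + padicValNat 5 (m !) := by
      rw [← hch, padicValNat.mul (p := 5) (Nat.mul_pos (Nat.choose_pos (Nat.le_add_right m n)) (Nat.factorial_pos n)).ne' (Nat.factorial_pos m).ne',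
          padicValNat.mul (p := 5) (Nat.choose_pos (Nat.le_add_right m n)).ne'
            (Nat.factorial_pos n).ne']
    omega
  rw [hval]
  -- Kummer
  set b : ℕ := Nat.log 5 (m + n) + 2 with hb
  have hlog : Nat.log 5 (m + n) < b := by omega
  have hkummer : padicValNat 5 (Nat.choose (m + n) m) =
      ((Finset.Ico 1 b).filter fun i => 5 ^ i ≤ m % 5 ^ i + n % 5 ^ i).card := by
    have := padicValNat_choose' (p := 5) (n := n) (k := m) (b := b) (by rwa [add_comm n m])
    rwa [add_comm n m] at this
  rw [hkummer]
  -- identify the set with a finset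
  set T : Finset ℕ := (Finset.range (b - 1)).filter
      (fun i => 5 ^ (i + 1) ≤ m % 5 ^ (i + 1) + n % 5 ^ (i + 1)) with hT
  have hset : {i : ℕ | 5 ^ (i + 1) ≤ m % 5 ^ (i + 1) + n % 5 ^ (i + 1)} = ↑T := by
    ext i
    simp only [hT, Finset.coe_filter, Finset.mem_range, Set.mem_setOf_eq, Finset.mem_coe]
    constructor
    · intro h
      refine ⟨?_, h⟩
      have h1 : 5 ^ (i + 1) ≤ m + n :=
        le_trans h (Nat.add_le_add (Nat.mod_le _ _) (Nat.mod_le _ _))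
      have h2 : i + 1 ≤ Nat.log 5 (m + n) := (Nat.le_log_iff_pow_le (by norm_num) (by omega)).mpr h1
      omega
    · exact fun h => h.2
  rw [hset, Set.ncard_coe_finset]
  -- bijection i ↦ i + 1
  apply Finset.card_bij (fun i _ => i - 1)
  · intro a ha
    simp only [Finset.mem_filter, Finset.mem_Ico] at ha
    simp only [hT, Finset.mem_filter, Finset.mem_range]
    constructor
    · omega
    · rw [show a - 1 + 1 = a by omega]; exact ha.2
  · intro a ha a' ha' h
    simp only [Finset.mem_filter, Finset.mem_Ico] at ha ha'
    omega
  · intro a ha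
    simp only [hT, Finset.mem_filter, Finset.mem_range] at ha
    exact ⟨a + 1, by simp only [Finset.mem_filter, Finset.mem_Ico]; exact ⟨⟨by omega, by omega⟩, ha.2⟩, by omega⟩
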